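/- Let V be a nonempty finite index set, W_0 an n×n real symmetric positive definite matrix, and for each ω ∈ V let W_ω be a nonzero n×n real symmetric positive semidefinite matrix; set W̄_S := W_0 + ∑_{ω ∈ S} W_ω and f(S) := −tr(W̄_S^{−1}). Let γ₀ := [min_{ω ∈ V} tr(W_ω) · (min_{ω ∈ V} λ_n(W̄_ω))²] / [max_{ω ∈ V} tr(W_ω) · λ_1(W̄_V)²]. Then γ₀ > 0 and for all Ω, S ⊆ V: ∑_{ω ∈ Ω \ S} [f(S ∪ {ω}) − f(S)] ≥ γ₀ · [f(S ∪ Ω) − f(S)]. In particular, the submodularity ratio of f is at least γ₀. -/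

import Mathlib

open Classical in
/-- Smallest eigenvalue of a real symmetric matrix (junk value `0` if not symmetric). -/
noncomputable def lambdaMin {n : ℕ} (M : Matrix (Fin n) (Fin n) ℝ) : ℝ :=
  if h : M.IsHermitian then ⨅ i, h.eigenvalues i else 0

open Classical in
/-- Largest eigenvalue of a real symmetric matrix (junk value `0` if not symmetric). -/
noncomputable def lambdaMax {n : ℕ} (M : Matrix (Fin n) (Fin n) ℝ) : ℝ :=
  if h : M.IsHermitian then ⨆ i, h.eigenvalues i else 0

open Matrix

namespace SubmodAux

variable {n : ℕ}

local notation "Mat" => Matrix (Fin n) (Fin n) ℝ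

lemma dot_self_pos {v : Fin n → ℝ} (hv : v ≠ 0) : 0 < v ⬝ᵥ v := by
  obtain ⟨i, hi⟩ := Function.ne_iff.mp hv
  exact Finset.sum_pos' (fun j _ => mul_self_nonneg (v j))
    ⟨i, Finset.mem_univ i, mul_self_pos.mpr hi⟩

lemma psd_exists_factor {A : Mat} (hA : A.PosSemidef) : ∃ C : Mat, A = Cᴴ * C := by
  have h := hA.1.spectral_theorem
  rw [Unitary.conjStarAlgAut_apply, Matrix.star_eq_conjTranspose] at h
  simp only [RCLike.ofReal_real_eq_id, Function.id_comp] at h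
  refine ⟨Matrix.diagonal (fun i => Real.sqrt (hA.1.eigenvalues i)) *
    (hA.1.eigenvectorUnitary : Mat)ᴴ, ?_⟩
  have hd : Matrix.diagonal hA.1.eigenvalues =
      (Matrix.diagonal (fun i => Real.sqrt (hA.1.eigenvalues i)))ᴴ *
        Matrix.diagonal (fun i => Real.sqrt (hA.1.eigenvalues i)) := by
    rw [Matrix.diagonal_conjTranspose, Matrix.diagonal_mul_diagonal]
    congr 1
    funext i
    simp [Real.mul_self_sqrt (hA.eigenvalues_nonneg i)]
  rw [Matrix.conjTranspose_mul, Matrix.conjTranspose_conjTranspose]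
  nth_rewrite 1 [h]
  rw [hd]
  simp only [Matrix.mul_assoc]

lemma trace_psd_nonneg {A : Mat} (hA : A.PosSemidef) : 0 ≤ A.trace := by
  apply Finset.sum_nonneg
  intro i _
  have h := hA.dotProduct_mulVec_nonneg (Pi.single i 1)
  simpa [dotProduct, Matrix.mulVec_single, Pi.single_apply, Finset.sum_ite_eq] using h

lemma trace_mul_psd_nonneg {A B : Mat} (hA : A.PosSemidef) (hB : B.PosSemidef) :
    0 ≤ (A * B).trace := by
  obtain ⟨C, rfl⟩ := psd_exists_factor hA
  have h2 := hB.mul_mul_conjTranspose_same C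
  calc (0:ℝ) ≤ (C * B * Cᴴ).trace := trace_psd_nonneg h2
  _ = (Cᴴ * C * B).trace := by
      rw [Matrix.trace_mul_cycle]

lemma mul_inv_cancel_pd {A : Mat} (hA : A.PosDef) : A * A⁻¹ = 1 :=
  Matrix.mul_nonsing_inv _ hA.det_pos.ne'.isUnit

lemma inv_mul_cancel_pd {A : Mat} (hA : A.PosDef) : A⁻¹ * A = 1 :=
  Matrix.nonsing_inv_mul _ hA.det_pos.ne'.isUnit

lemma idPBQ {A B : Mat} (hA : A.PosDef) (hAB : (A + B).PosDef) :
    A⁻¹ - (A + B)⁻¹ = A⁻¹ * B * (A + B)⁻¹ := by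
  have h1 : A⁻¹ * ((A + B) * (A + B)⁻¹) = A⁻¹ := by rw [mul_inv_cancel_pd hAB, mul_one]
  have h2 : A⁻¹ * A * (A + B)⁻¹ = (A + B)⁻¹ := by rw [inv_mul_cancel_pd hA, one_mul]
  calc A⁻¹ - (A + B)⁻¹ = A⁻¹ * ((A + B) * (A + B)⁻¹) - A⁻¹ * A * (A + B)⁻¹ := by
        rw [h1, h2]
  _ = A⁻¹ * B * (A + B)⁻¹ := by noncomm_ring

lemma idQBP {A B : Mat} (hA : A.PosDef) (hAB : (A + B).PosDef) :
    A⁻¹ - (A + B)⁻¹ = (A + B)⁻¹ * B * A⁻¹ := by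
  have h1 : (A + B)⁻¹ * ((A + B) * A⁻¹) = A⁻¹ := by
    rw [← Matrix.mul_assoc, inv_mul_cancel_pd hAB, one_mul]
  have h2 : (A + B)⁻¹ * (A * A⁻¹) = (A + B)⁻¹ := by rw [mul_inv_cancel_pd hA, mul_one]
  calc A⁻¹ - (A + B)⁻¹ = (A + B)⁻¹ * ((A + B) * A⁻¹) - (A + B)⁻¹ * (A * A⁻¹) := by
        rw [h1, h2]
  _ = (A + B)⁻¹ * B * A⁻¹ := by noncomm_ring

lemma diff_sub_QBQ {A B : Mat} (hA : A.PosDef) (hB : B.IsHermitian) (hAB : (A + B).PosDef) :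
    (A⁻¹ - (A + B)⁻¹) - (A + B)⁻¹ * B * (A + B)⁻¹
      = ((A + B)⁻¹ * B) * A⁻¹ * ((A + B)⁻¹ * B)ᴴ := by
  have hQ : ((A + B)⁻¹).IsHermitian := (hA.1.add hB).inv
  have hT : ((A + B)⁻¹ * B)ᴴ = B * (A + B)⁻¹ := by
    rw [Matrix.conjTranspose_mul, hB, hQ]
  rw [hT]
  calc (A⁻¹ - (A + B)⁻¹) - (A + B)⁻¹ * B * (A + B)⁻¹
      = (A + B)⁻¹ * B * A⁻¹ - (A + B)⁻¹ * B * (A + B)⁻¹ := by rw [← idQBP hA hAB]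
  _ = (A + B)⁻¹ * B * (A⁻¹ - (A + B)⁻¹) := by noncomm_ring
  _ = (A + B)⁻¹ * B * (A⁻¹ * B * (A + B)⁻¹) := by rw [← idPBQ hA hAB]
  _ = (A + B)⁻¹ * B * A⁻¹ * (B * (A + B)⁻¹) := by noncomm_ring

lemma PBP_sub_diff {A B : Mat} (hA : A.PosDef) (hB : B.IsHermitian) (hAB : (A + B).PosDef) :
    A⁻¹ * B * A⁻¹ - (A⁻¹ - (A + B)⁻¹)
      = (A⁻¹ * B) * (A + B)⁻¹ * (A⁻¹ * B)ᴴ := by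
  have hP : (A⁻¹).IsHermitian := hA.1.inv
  have hT : (A⁻¹ * B)ᴴ = B * A⁻¹ := by rw [Matrix.conjTranspose_mul, hB, hP]
  rw [hT]
  calc A⁻¹ * B * A⁻¹ - (A⁻¹ - (A + B)⁻¹)
      = A⁻¹ * B * A⁻¹ - A⁻¹ * B * (A + B)⁻¹ := by rw [idPBQ hA hAB]
  _ = A⁻¹ * B * (A⁻¹ - (A + B)⁻¹) := by noncomm_ring
  _ = A⁻¹ * B * ((A + B)⁻¹ * B * A⁻¹) := by rw [← idQBP hA hAB]
  _ = A⁻¹ * B * (A + B)⁻¹ * (B * A⁻¹) := by noncomm_ring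

lemma diff_psd {A B : Mat} (hA : A.PosDef) (hB : B.PosSemidef) :
    (A⁻¹ - (A + B)⁻¹).PosSemidef := by
  have hAB : (A + B).PosDef := hA.add_posSemidef hB
  have hQ : ((A + B)⁻¹).PosSemidef := hAB.inv.posSemidef
  have hQH : ((A + B)⁻¹).IsHermitian := hQ.isHermitian
  have h1 : ((A + B)⁻¹ * B * (A + B)⁻¹).PosSemidef := by
    have := hB.mul_mul_conjTranspose_same (A + B)⁻¹
    rwa [hQH] at this
  have h2 := (hA.inv.posSemidef.mul_mul_conjTranspose_same ((A + B)⁻¹ * B))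
  rw [← diff_sub_QBQ hA hB.isHermitian hAB] at h2
  have := h1.add h2
  rwa [add_sub_cancel] at this

lemma pd_mul_self {M : Mat} (hM : M.PosDef) : (M * M).PosDef := by
  refine Matrix.PosDef.of_dotProduct_mulVec_pos ?_ ?_
  · rw [Matrix.IsHermitian, Matrix.conjTranspose_mul, hM.1]
  · intro x hx
    have hy : M *ᵥ x ≠ 0 := by
      intro h
      apply hx
      have := congrArg (fun v => M⁻¹ *ᵥ v) h
      simpa [Matrix.mulVec_mulVec, inv_mul_cancel_pd hM] using this
    have h2 : star x ⬝ᵥ (M * M) *ᵥ x = star (M *ᵥ x) ⬝ᵥ (M *ᵥ x) := by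
      nth_rewrite 1 [← hM.1]
      rw [← Matrix.mulVec_mulVec, Matrix.dotProduct_mulVec, ← Matrix.star_mulVec]
    rw [h2]
    simpa using dot_self_pos hy

lemma psd_smul_one {c : ℝ} (hc : 0 ≤ c) : ((c • 1 : Mat)).PosSemidef := by
  rw [Matrix.smul_one_eq_diagonal]
  exact Matrix.PosSemidef.diagonal (fun i => hc)

lemma pd_smul_one {c : ℝ} (hc : 0 < c) : ((c • 1 : Mat)).PosDef := by
  rw [Matrix.smul_one_eq_diagonal]
  exact Matrix.PosDef.diagonal (fun i => hc)

lemma inv_smul_one {c : ℝ} (hc : c ≠ 0) : (c • 1 : Mat)⁻¹ = c⁻¹ • 1 := by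
  apply Matrix.inv_eq_right_inv
  rw [Matrix.smul_mul, Matrix.mul_smul, one_mul, smul_smul, mul_inv_cancel₀ hc, one_smul]

lemma const_nonneg_of_psd (hn : 0 < n) {c : ℝ} (h : ((c • 1 : Mat)).PosSemidef) : 0 ≤ c := by
  have hx := h.dotProduct_mulVec_nonneg (Pi.single ⟨0, hn⟩ 1)
  simpa [dotProduct, Pi.single_apply, Finset.sum_ite_eq] using hx

-- spectral lemmas
lemma conj_sub (U A B C : Mat) : U * A * C - U * B * C = U * (A - B) * C := by noncomm_ring

lemma diagonal_sub' (f g : Fin n → ℝ) :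
    (Matrix.diagonal (fun i => f i - g i) : Mat) = Matrix.diagonal f - Matrix.diagonal g := by
  ext i j
  by_cases hij : i = j <;> simp [Matrix.diagonal_apply, hij]

lemma conj_diag_psd {M : Mat} (hM : M.IsHermitian) {d : Fin n → ℝ} (hd : ∀ i, 0 ≤ d i) :
    (((hM.eigenvectorUnitary : Mat)) * Matrix.diagonal d * (hM.eigenvectorUnitary : Mat)ᴴ).PosSemidef :=
  (Matrix.PosSemidef.diagonal hd).mul_mul_conjTranspose_same _

lemma repM {M : Mat} (hM : M.IsHermitian) :
    M = (hM.eigenvectorUnitary : Mat) * Matrix.diagonal hM.eigenvalues *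
      (hM.eigenvectorUnitary : Mat)ᴴ := by
  have h := hM.spectral_theorem
  rwa [Unitary.conjStarAlgAut_apply, Matrix.star_eq_conjTranspose] at h

lemma repSmul {M : Mat} (hM : M.IsHermitian) (c : ℝ) :
    (c • 1 : Mat) = (hM.eigenvectorUnitary : Mat) * Matrix.diagonal (fun _ => c) *
      (hM.eigenvectorUnitary : Mat)ᴴ := by
  have hU : (hM.eigenvectorUnitary : Mat) * (hM.eigenvectorUnitary : Mat)ᴴ = 1 := by
    rw [← Matrix.star_eq_conjTranspose]
    exact Matrix.mem_unitaryGroup_iff.mp hM.eigenvectorUnitary.2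
  rw [← Matrix.smul_one_eq_diagonal, Matrix.mul_smul, mul_one, Matrix.smul_mul, hU]

lemma repMM {M : Mat} (hM : M.IsHermitian) :
    M * M = (hM.eigenvectorUnitary : Mat) * Matrix.diagonal (fun i => hM.eigenvalues i ^ 2) *
      (hM.eigenvectorUnitary : Mat)ᴴ := by
  have hU' : (hM.eigenvectorUnitary : Mat)ᴴ * (hM.eigenvectorUnitary : Mat) = 1 := by
    rw [← Matrix.star_eq_conjTranspose]
    exact Matrix.mem_unitaryGroup_iff'.mp hM.eigenvectorUnitary.2
  calc M * M
      = ((hM.eigenvectorUnitary : Mat) * Matrix.diagonal hM.eigenvalues *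
          (hM.eigenvectorUnitary : Mat)ᴴ) * ((hM.eigenvectorUnitary : Mat) *
          Matrix.diagonal hM.eigenvalues * (hM.eigenvectorUnitary : Mat)ᴴ) := by rw [← repM hM]
  _ = (hM.eigenvectorUnitary : Mat) * (Matrix.diagonal hM.eigenvalues *
        ((hM.eigenvectorUnitary : Mat)ᴴ * (hM.eigenvectorUnitary : Mat)) *
        Matrix.diagonal hM.eigenvalues) * (hM.eigenvectorUnitary : Mat)ᴴ := by
      noncomm_ring
  _ = (hM.eigenvectorUnitary : Mat) * Matrix.diagonal (fun i => hM.eigenvalues i ^ 2) *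
      (hM.eigenvectorUnitary : Mat)ᴴ := by
      rw [hU', mul_one, Matrix.diagonal_mul_diagonal]
      congr 1
      ext i
      ring
lemma eig_ge {M : Mat} (hM : M.IsHermitian) {c : ℝ} (h : (M - c • 1).PosSemidef) (i : Fin n) :
    c ≤ hM.eigenvalues i := by
  have hvne : (⇑(hM.eigenvectorBasis i) : Fin n → ℝ) ≠ 0 := by
    have h0 := hM.eigenvectorBasis.orthonormal.ne_zero i
    intro hc
    exact h0 (by ext j; exact congrFun hc j)
  have hmv : M *ᵥ ⇑(hM.eigenvectorBasis i) = hM.eigenvalues i • ⇑(hM.eigenvectorBasis i) :=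
    hM.mulVec_eigenvectorBasis i
  have hq := h.dotProduct_mulVec_nonneg (⇑(hM.eigenvectorBasis i))
  rw [Matrix.sub_mulVec, Matrix.smul_mulVec, Matrix.one_mulVec, hmv] at hq
  simp only [dotProduct_sub, dotProduct_smul, smul_eq_mul, star_trivial] at hq
  have hvv := dot_self_pos hvne
  nlinarith [hq, hvv]

lemma eig_le {M : Mat} (hM : M.IsHermitian) {c : ℝ} (h : (c • 1 - M).PosSemidef) (i : Fin n) :
    hM.eigenvalues i ≤ c := by
  have hvne : (⇑(hM.eigenvectorBasis i) : Fin n → ℝ) ≠ 0 := by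
    have h0 := hM.eigenvectorBasis.orthonormal.ne_zero i
    intro hc
    exact h0 (by ext j; exact congrFun hc j)
  have hmv : M *ᵥ ⇑(hM.eigenvectorBasis i) = hM.eigenvalues i • ⇑(hM.eigenvectorBasis i) :=
    hM.mulVec_eigenvectorBasis i
  have hq := h.dotProduct_mulVec_nonneg (⇑(hM.eigenvectorBasis i))
  rw [Matrix.sub_mulVec, Matrix.smul_mulVec, Matrix.one_mulVec, hmv] at hq
  simp only [dotProduct_sub, dotProduct_smul, smul_eq_mul, star_trivial] at hq
  have hvv := dot_self_pos hvne
  nlinarith [hq, hvv]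

lemma psd_sub_smul {M : Mat} (hM : M.IsHermitian) {c : ℝ}
    (h : ∀ i, c ≤ hM.eigenvalues i) : (M - c • 1).PosSemidef := by
  have e : (hM.eigenvectorUnitary : Mat) *
      Matrix.diagonal (fun i => hM.eigenvalues i - c) * (hM.eigenvectorUnitary : Mat)ᴴ
      = M - c • 1 := by
    rw [diagonal_sub', ← conj_sub, ← repM hM, ← repSmul hM c]
  rw [← e]
  exact conj_diag_psd hM (fun i => sub_nonneg.mpr (h i))

lemma psd_smul_sub {M : Mat} (hM : M.IsHermitian) {c : ℝ}
    (h : ∀ i, hM.eigenvalues i ≤ c) : (c • 1 - M).PosSemidef := by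
  have e : (hM.eigenvectorUnitary : Mat) *
      Matrix.diagonal (fun i => c - hM.eigenvalues i) * (hM.eigenvectorUnitary : Mat)ᴴ
      = c • 1 - M := by
    rw [diagonal_sub', ← conj_sub, ← repM hM, ← repSmul hM c]
  rw [← e]
  exact conj_diag_psd hM (fun i => sub_nonneg.mpr (h i))

lemma psd_sq_sub {M : Mat} (hM : M.IsHermitian) {c : ℝ} (hc : 0 ≤ c)
    (h : ∀ i, c ≤ hM.eigenvalues i) : (M * M - (c ^ 2) • 1).PosSemidef := by
  have e : (hM.eigenvectorUnitary : Mat) *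
      Matrix.diagonal (fun i => hM.eigenvalues i ^ 2 - c ^ 2) *
      (hM.eigenvectorUnitary : Mat)ᴴ = M * M - (c ^ 2) • 1 := by
    rw [diagonal_sub', ← conj_sub, ← repMM hM, ← repSmul hM (c ^ 2)]
  rw [← e]
  refine conj_diag_psd hM (fun i => sub_nonneg.mpr ?_)
  exact pow_le_pow_left₀ hc (h i) 2

lemma psd_sub_sq {M : Mat} (hM : M.IsHermitian) {c : ℝ}
    (h0 : ∀ i, 0 ≤ hM.eigenvalues i) (h : ∀ i, hM.eigenvalues i ≤ c) :
    ((c ^ 2) • 1 - M * M).PosSemidef := by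
  have e : (hM.eigenvectorUnitary : Mat) *
      Matrix.diagonal (fun i => c ^ 2 - hM.eigenvalues i ^ 2) *
      (hM.eigenvectorUnitary : Mat)ᴴ = (c ^ 2) • 1 - M * M := by
    rw [diagonal_sub', ← conj_sub, ← repMM hM, ← repSmul hM (c ^ 2)]
  rw [← e]
  refine conj_diag_psd hM (fun i => sub_nonneg.mpr ?_)
  exact pow_le_pow_left₀ (h0 i) (h i) 2

lemma upper_est {A B : Mat} (hA : A.PosDef) (hB : B.PosSemidef) {c : ℝ} (hc : 0 < c)
    (hlb : (A - c • 1).PosSemidef) :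
    A⁻¹.trace - (A + B)⁻¹.trace ≤ B.trace / c ^ 2 := by
  have hAB : (A + B).PosDef := hA.add_posSemidef hB
  have h1 : (A⁻¹ - (A + B)⁻¹).trace ≤ (A⁻¹ * B * A⁻¹).trace := by
    have hpsd := hAB.inv.posSemidef.mul_mul_conjTranspose_same (A⁻¹ * B)
    rw [← PBP_sub_diff hA hB.isHermitian hAB] at hpsd
    have := trace_psd_nonneg hpsd
    rw [Matrix.trace_sub] at this
    linarith
  have h2 : (A⁻¹ * B * A⁻¹).trace = ((A * A)⁻¹ * B).trace := by
    rw [Matrix.trace_mul_cycle, ← Matrix.mul_inv_rev]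
  have hc2 : (0:ℝ) < c ^ 2 := by positivity
  have heig := eig_ge hA.1 hlb
  have hsq : (A * A - (c ^ 2) • 1).PosSemidef := psd_sq_sub hA.1 hc.le heig
  have hinv : ((c ^ 2)⁻¹ • 1 - (A * A)⁻¹).PosSemidef := by
    have hd := diff_psd (pd_smul_one hc2) hsq
    have e : ((c ^ 2) • 1 : Mat) + (A * A - (c ^ 2) • 1) = A * A := by abel
    rw [e, inv_smul_one hc2.ne'] at hd
    exact hd
  have h3 : ((A * A)⁻¹ * B).trace ≤ (c ^ 2)⁻¹ * B.trace := by
    have ht := trace_mul_psd_nonneg hinv hB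
    rw [Matrix.sub_mul, Matrix.trace_sub, Matrix.smul_mul, one_mul, Matrix.trace_smul,
      smul_eq_mul] at ht
    linarith
  have h0 : A⁻¹.trace - (A + B)⁻¹.trace = (A⁻¹ - (A + B)⁻¹).trace := (Matrix.trace_sub _ _).symm
  rw [h0, div_eq_inv_mul]
  linarith [h1, h3, h2.le, h2.ge]

lemma lower_est {A B : Mat} (hA : A.PosDef) (hB : B.PosSemidef) {c : ℝ} (hc : 0 < c)
    (hub : (c • 1 - (A + B)).PosSemidef) :
    B.trace / c ^ 2 ≤ A⁻¹.trace - (A + B)⁻¹.trace := by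
  have hAB : (A + B).PosDef := hA.add_posSemidef hB
  have h1 : ((A + B)⁻¹ * B * (A + B)⁻¹).trace ≤ (A⁻¹ - (A + B)⁻¹).trace := by
    have hpsd := hA.inv.posSemidef.mul_mul_conjTranspose_same ((A + B)⁻¹ * B)
    rw [← diff_sub_QBQ hA hB.isHermitian hAB] at hpsd
    have := trace_psd_nonneg hpsd
    rw [Matrix.trace_sub] at this
    linarith
  have h2 : ((A + B)⁻¹ * B * (A + B)⁻¹).trace = (((A + B) * (A + B))⁻¹ * B).trace := by
    rw [Matrix.trace_mul_cycle, ← Matrix.mul_inv_rev]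
  have hc2 : (0:ℝ) < c ^ 2 := by positivity
  have heig := eig_le hAB.1 hub
  have heig0 : ∀ i, 0 ≤ (hAB.1 : (A + B).IsHermitian).eigenvalues i := fun i =>
    hAB.posSemidef.eigenvalues_nonneg i
  have hsq : ((c ^ 2) • 1 - (A + B) * (A + B)).PosSemidef := psd_sub_sq hAB.1 heig0 heig
  have hinv : (((A + B) * (A + B))⁻¹ - (c ^ 2)⁻¹ • 1).PosSemidef := by
    have hd := diff_psd (pd_mul_self hAB) hsq
    have e : (A + B) * (A + B) + ((c ^ 2) • 1 - (A + B) * (A + B)) = ((c ^ 2) • 1 : Mat) := by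
      abel
    rw [e, inv_smul_one hc2.ne'] at hd
    exact hd
  have h3 : (c ^ 2)⁻¹ * B.trace ≤ (((A + B) * (A + B))⁻¹ * B).trace := by
    have ht := trace_mul_psd_nonneg hinv hB
    rw [Matrix.sub_mul, Matrix.trace_sub, Matrix.smul_mul, one_mul, Matrix.trace_smul,
      smul_eq_mul] at ht
    linarith
  have h0 : A⁻¹.trace - (A + B)⁻¹.trace = (A⁻¹ - (A + B)⁻¹).trace := (Matrix.trace_sub _ _).symm
  rw [h0, div_eq_inv_mul]
  linarith [h1, h3, h2.le, h2.ge]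

lemma trace_pos_of_ne_zero {M : Mat} (hM : M.PosSemidef) (h : M ≠ 0) : 0 < M.trace := by
  rcases lt_or_eq_of_le (trace_psd_nonneg hM) with hlt | heq
  · exact hlt
  exfalso
  apply h
  obtain ⟨C, rfl⟩ := psd_exists_factor hM
  have hC : C = 0 := by
    have ht : (Cᴴ * C).trace = ∑ j, ∑ i, (C i j) ^ 2 := by
      simp [Matrix.trace, Matrix.diag, Matrix.mul_apply, Matrix.conjTranspose_apply, sq]
    rw [← heq] at ht
    ext i j
    have hz : ∑ j, ∑ i, (C i j) ^ 2 = 0 := ht.symm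
    have hj := (Finset.sum_eq_zero_iff_of_nonneg (fun j _ => Finset.sum_nonneg
      (fun i _ => sq_nonneg (C i j)))).mp hz j (Finset.mem_univ j)
    have hi := (Finset.sum_eq_zero_iff_of_nonneg (fun i _ => sq_nonneg (C i j))).mp hj i
      (Finset.mem_univ i)
    simpa using pow_eq_zero_iff (n := 2) (by norm_num) |>.mp hi
  rw [hC]
  simp

-- lambda lemmas
lemma lambdaMin_le {M : Mat} (hM : M.IsHermitian) (i : Fin n) :
    lambdaMin M ≤ hM.eigenvalues i := by
  rw [lambdaMin, dif_pos hM]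
  exact ciInf_le (Set.Finite.bddBelow (Set.finite_range _)) i

lemma le_lambdaMax {M : Mat} (hM : M.IsHermitian) (i : Fin n) :
    hM.eigenvalues i ≤ lambdaMax M := by
  rw [lambdaMax, dif_pos hM]
  exact le_ciSup (Set.Finite.bddAbove (Set.finite_range _)) i

lemma psd_sub_lambdaMin {M : Mat} (hM : M.IsHermitian) : (M - lambdaMin M • 1).PosSemidef :=
  psd_sub_smul hM (lambdaMin_le hM)

lemma psd_lambdaMax_sub {M : Mat} (hM : M.IsHermitian) : (lambdaMax M • 1 - M).PosSemidef :=
  psd_smul_sub hM (le_lambdaMax hM)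

lemma lambdaMin_pos (hn : 0 < n) {M : Mat} (hM : M.PosDef) : 0 < lambdaMin M := by
  haveI : Nonempty (Fin n) := ⟨⟨0, hn⟩⟩
  rw [lambdaMin, dif_pos hM.1]
  obtain ⟨i, hi⟩ := Finite.exists_min hM.1.eigenvalues
  have : ⨅ j, hM.1.eigenvalues j = hM.1.eigenvalues i :=
    le_antisymm (ciInf_le (Set.Finite.bddBelow (Set.finite_range _)) i) (le_ciInf hi)
  rw [this]
  exact hM.eigenvalues_pos i

lemma lambdaMax_pos (hn : 0 < n) {M : Mat} (hM : M.PosDef) : 0 < lambdaMax M := by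
  haveI : Nonempty (Fin n) := ⟨⟨0, hn⟩⟩
  exact lt_of_lt_of_le (hM.eigenvalues_pos ⟨0, hn⟩) (le_lambdaMax hM.1 ⟨0, hn⟩)

end SubmodAux


open SubmodAux

/-- Lower bound `γ₀` on the submodularity ratio of `f(S) = -tr(W̄_S⁻¹)`, where
`W̄_S = W₀ + ∑_{ω ∈ S} W_ω` with `W₀` positive definite and each `W_ω` a nonzero positive
semidefinite matrix. -/
theorem trace_inv_gramian_submodularity_ratio
    {n : ℕ} {V : Type*} [Fintype V] [DecidableEq V] [Nonempty V]
    (W₀ : Matrix (Fin n) (Fin n) ℝ) (hW₀ : W₀.PosDef)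
    (W : V → Matrix (Fin n) (Fin n) ℝ) (hW : ∀ ω, (W ω).PosSemidef)
    (hWne : ∀ ω, W ω ≠ 0)
    (γ₀ : ℝ)
    (hγ₀ : γ₀ = ((⨅ ω : V, (W ω).trace) * (⨅ ω : V, lambdaMin (W₀ + W ω)) ^ 2) /
        ((⨆ ω : V, (W ω).trace) *
          (lambdaMax (W₀ + ∑ i ∈ (Finset.univ : Finset V), W i)) ^ 2)) :
    0 < γ₀ ∧
    ∀ Ω S : Finset V,
      ∑ ω ∈ Ω \ S,
          (-(((W₀ + ∑ i ∈ insert ω S, W i)⁻¹).trace) - -(((W₀ + ∑ i ∈ S, W i)⁻¹).trace)) ≥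
        γ₀ * (-(((W₀ + ∑ i ∈ S ∪ Ω, W i)⁻¹).trace) - -(((W₀ + ∑ i ∈ S, W i)⁻¹).trace)) := by
  classical
  rcases Nat.eq_zero_or_pos n with hn0 | hn
  · exfalso
    apply hWne (Classical.arbitrary V)
    subst hn0
    ext i j
    exact absurd i.isLt (Nat.not_lt_zero _)
  haveI : Nonempty (Fin n) := ⟨⟨0, hn⟩⟩
  have hpsdsum : ∀ S : Finset V, (∑ i ∈ S, W i).PosSemidef := fun S =>
    Finset.sum_induction W _ (fun a b ha hb => ha.add hb) Matrix.PosSemidef.zero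
      (fun i _ => hW i)
  have hPD : ∀ S : Finset V, (W₀ + ∑ i ∈ S, W i).PosDef := fun S =>
    hW₀.add_posSemidef (hpsdsum S)
  have hmono : ∀ {S T : Finset V}, S ⊆ T →
      ((W₀ + ∑ i ∈ T, W i) - (W₀ + ∑ i ∈ S, W i)).PosSemidef := by
    intro S T hST
    have e : (W₀ + ∑ i ∈ T, W i) - (W₀ + ∑ i ∈ S, W i) = ∑ i ∈ T \ S, W i := by
      rw [← Finset.sum_sdiff hST]
      abel
    rw [e]
    exact hpsdsum _
  set tmin := ⨅ ω : V, (W ω).trace with htmin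
  set tmax := ⨆ ω : V, (W ω).trace with htmax
  set m := ⨅ ω : V, lambdaMin (W₀ + W ω) with hm
  set L := lambdaMax (W₀ + ∑ i ∈ (Finset.univ : Finset V), W i) with hL
  have htr_pos : ∀ ω, 0 < (W ω).trace := fun ω => trace_pos_of_ne_zero (hW ω) (hWne ω)
  have htmin_le : ∀ ω, tmin ≤ (W ω).trace := fun ω =>
    ciInf_le (f := fun ω => (W ω).trace) (Set.Finite.bddBelow (Set.finite_range _)) ω
  have htmax_ge : ∀ ω, (W ω).trace ≤ tmax := fun ω =>
    le_ciSup (f := fun ω => (W ω).trace) (Set.Finite.bddAbove (Set.finite_range _)) ω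
  have htmin_pos : 0 < tmin := by
    obtain ⟨ω, hω⟩ := Finite.exists_min (fun ω => (W ω).trace)
    have e : tmin = (W ω).trace := le_antisymm (htmin_le ω) (le_ciInf hω)
    rw [e]
    exact htr_pos ω
  have htmax_pos : 0 < tmax := lt_of_lt_of_le (htr_pos (Classical.arbitrary V)) (htmax_ge _)
  have hWωPD : ∀ ω, (W₀ + W ω).PosDef := fun ω => hW₀.add_posSemidef (hW ω)
  have hm_le : ∀ ω, m ≤ lambdaMin (W₀ + W ω) := fun ω =>
    ciInf_le (f := fun ω => lambdaMin (W₀ + W ω)) (Set.Finite.bddBelow (Set.finite_range _)) ω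
  have hm_pos : 0 < m := by
    obtain ⟨ω, hω⟩ := Finite.exists_min (fun ω => lambdaMin (W₀ + W ω))
    have e : m = lambdaMin (W₀ + W ω) := le_antisymm (hm_le ω) (le_ciInf hω)
    rw [e]
    exact lambdaMin_pos hn (hWωPD ω)
  have hL_pos : 0 < L := lambdaMax_pos hn (hPD Finset.univ)
  -- PSD facts
  have hub : ∀ T : Finset V, (L • 1 - (W₀ + ∑ i ∈ T, W i)).PosSemidef := by
    intro T
    have h1 := psd_lambdaMax_sub (hPD Finset.univ).1
    have h2 := hmono (Finset.subset_univ T)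
    have e : L • (1 : Matrix (Fin n) (Fin n) ℝ) - (W₀ + ∑ i ∈ T, W i) =
        (L • 1 - (W₀ + ∑ i ∈ (Finset.univ : Finset V), W i)) +
        ((W₀ + ∑ i ∈ (Finset.univ : Finset V), W i) - (W₀ + ∑ i ∈ T, W i)) := by abel
    rw [e]
    exact h1.add h2
  have hlbT : ∀ {T : Finset V} {ω' : V}, ω' ∈ T →
      ((W₀ + ∑ i ∈ T, W i) - m • 1).PosSemidef := by
    intro T ω' hω'
    have h1 : ((W₀ + W ω') - lambdaMin (W₀ + W ω') • 1).PosSemidef :=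
      psd_sub_lambdaMin (hWωPD ω').1
    have h2 : ((W₀ + ∑ i ∈ T, W i) - (W₀ + ∑ i ∈ ({ω'} : Finset V), W i)).PosSemidef :=
      hmono (Finset.singleton_subset_iff.mpr hω')
    rw [Finset.sum_singleton] at h2
    have h3 : (((lambdaMin (W₀ + W ω') - m)) • (1 : Matrix (Fin n) (Fin n) ℝ)).PosSemidef :=
      psd_smul_one (sub_nonneg.mpr (hm_le ω'))
    have e : (W₀ + ∑ i ∈ T, W i) - m • 1 =
        ((W₀ + ∑ i ∈ T, W i) - (W₀ + W ω')) +
        (((W₀ + W ω') - lambdaMin (W₀ + W ω') • 1) +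
          (lambdaMin (W₀ + W ω') - m) • (1 : Matrix (Fin n) (Fin n) ℝ)) := by
      rw [sub_smul]
      abel
    rw [e]
    exact h2.add (h1.add h3)
  have hmL : m ≤ L := by
    have ω₀ := Classical.arbitrary V
    have h1 := hub ({ω₀} : Finset V)
    have h2 := hlbT (Finset.mem_singleton_self ω₀)
    have e : ((L - m) • (1 : Matrix (Fin n) (Fin n) ℝ)) =
        (L • 1 - (W₀ + ∑ i ∈ ({ω₀} : Finset V), W i)) +
        ((W₀ + ∑ i ∈ ({ω₀} : Finset V), W i) - m • 1) := by
      rw [sub_smul]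
      abel
    have := const_nonneg_of_psd hn (e ▸ (h1.add h2))
    linarith
  have hγpos : 0 < γ₀ := by
    rw [hγ₀]
    exact div_pos (mul_pos htmin_pos (pow_pos hm_pos 2)) (mul_pos htmax_pos (pow_pos hL_pos 2))
  have hγle1 : γ₀ ≤ 1 := by
    rw [hγ₀]
    rw [div_le_one (mul_pos htmax_pos (pow_pos hL_pos 2))]
    have h1 : tmin ≤ tmax := le_trans (htmin_le (Classical.arbitrary V))
      (htmax_ge (Classical.arbitrary V))
    exact mul_le_mul h1 (pow_le_pow_left₀ hm_pos.le hmL 2) (by positivity) htmax_pos.le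
  have hγeq : γ₀ * (tmax / m ^ 2) = tmin / L ^ 2 := by
    rw [hγ₀]
    field_simp
  refine ⟨hγpos, ?_⟩
  -- lower bound on each marginal gain
  have hρ_lb : ∀ (S : Finset V) (ω : V), ω ∉ S →
      (W ω).trace / L ^ 2 ≤
        (-(((W₀ + ∑ i ∈ insert ω S, W i)⁻¹).trace) - -(((W₀ + ∑ i ∈ S, W i)⁻¹).trace)) := by
    intro S ω hωS
    have e : W₀ + ∑ i ∈ insert ω S, W i = (W₀ + ∑ i ∈ S, W i) + W ω := by
      rw [Finset.sum_insert hωS]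
      abel
    have h := lower_est (hPD S) (hW ω) hL_pos (by rw [← e]; exact hub (insert ω S))
    rw [← e] at h
    linarith
  -- upper bound on gains above nonempty-augmented sets
  have hgain_ub : ∀ (T : Finset V) (ω ω' : V), ω ∉ T → ω' ∈ T →
      (-(((W₀ + ∑ i ∈ insert ω T, W i)⁻¹).trace) - -(((W₀ + ∑ i ∈ T, W i)⁻¹).trace)) ≤
        tmax / m ^ 2 := by
    intro T ω ω' hωT hω'T
    have e : W₀ + ∑ i ∈ insert ω T, W i = (W₀ + ∑ i ∈ T, W i) + W ω := by
      rw [Finset.sum_insert hωT]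
      abel
    have h := upper_est (hPD T) (hW ω) hm_pos (hlbT hω'T)
    rw [← e] at h
    have h2 : (W ω).trace / m ^ 2 ≤ tmax / m ^ 2 :=
      div_le_div_of_nonneg_right (htmax_ge ω) (pow_pos hm_pos 2).le
    linarith
  -- main induction
  have key : ∀ (R S : Finset V), Disjoint R S →
      γ₀ * (-(((W₀ + ∑ i ∈ S ∪ R, W i)⁻¹).trace) - -(((W₀ + ∑ i ∈ S, W i)⁻¹).trace)) ≤
        ∑ ω ∈ R,
          (-(((W₀ + ∑ i ∈ insert ω S, W i)⁻¹).trace) - -(((W₀ + ∑ i ∈ S, W i)⁻¹).trace)) := by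
    intro R
    induction R using Finset.induction_on with
    | empty => intro S _; simp
    | @insert ω R hωR ih =>
      intro S hdisj
      rw [Finset.disjoint_insert_left] at hdisj
      obtain ⟨hωS, hRS⟩ := hdisj
      have hωT : ω ∉ S ∪ R := by
        simp only [Finset.mem_union]
        rintro (h | h)
        · exact hωS h
        · exact hωR h
      have hsum : ∑ ω' ∈ insert ω R,
          (-(((W₀ + ∑ i ∈ insert ω' S, W i)⁻¹).trace) - -(((W₀ + ∑ i ∈ S, W i)⁻¹).trace)) =
          (-(((W₀ + ∑ i ∈ insert ω S, W i)⁻¹).trace) - -(((W₀ + ∑ i ∈ S, W i)⁻¹).trace)) +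
          ∑ ω' ∈ R,
          (-(((W₀ + ∑ i ∈ insert ω' S, W i)⁻¹).trace) - -(((W₀ + ∑ i ∈ S, W i)⁻¹).trace)) :=
        Finset.sum_insert hωR
      have hunion : S ∪ insert ω R = insert ω (S ∪ R) := Finset.union_insert ω S R
      have hstep : γ₀ * (-(((W₀ + ∑ i ∈ insert ω (S ∪ R), W i)⁻¹).trace) -
          -(((W₀ + ∑ i ∈ S ∪ R, W i)⁻¹).trace)) ≤
          (-(((W₀ + ∑ i ∈ insert ω S, W i)⁻¹).trace) - -(((W₀ + ∑ i ∈ S, W i)⁻¹).trace)) := by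
        rcases Finset.eq_empty_or_nonempty R with rfl | ⟨ω', hω'⟩
        · -- T = S : step is γ₀ * ρ ≤ ρ
          have hρ := hρ_lb S ω hωS
          have hρ0 : 0 ≤ (-(((W₀ + ∑ i ∈ insert ω S, W i)⁻¹).trace) -
              -(((W₀ + ∑ i ∈ S, W i)⁻¹).trace)) := by
            have : 0 ≤ (W ω).trace / L ^ 2 :=
              div_nonneg (htr_pos ω).le (pow_pos hL_pos 2).le
            linarith
          rw [Finset.union_empty]
          nlinarith [hγle1, hγpos.le]
        · have hg := hgain_ub (S ∪ R) ω ω' hωT (Finset.mem_union_right S hω')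
          have hρ := hρ_lb S ω hωS
          have htω : tmin / L ^ 2 ≤ (W ω).trace / L ^ 2 :=
            div_le_div_of_nonneg_right (htmin_le ω) (pow_pos hL_pos 2).le
          have hmul : γ₀ * (-(((W₀ + ∑ i ∈ insert ω (S ∪ R), W i)⁻¹).trace) -
              -(((W₀ + ∑ i ∈ S ∪ R, W i)⁻¹).trace)) ≤ γ₀ * (tmax / m ^ 2) :=
            mul_le_mul_of_nonneg_left hg hγpos.le
          rw [hγeq] at hmul
          linarith
      have hIH := ih S hRS
      rw [hsum, hunion]
      have expand : γ₀ * (-(((W₀ + ∑ i ∈ insert ω (S ∪ R), W i)⁻¹).trace) -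
          -(((W₀ + ∑ i ∈ S, W i)⁻¹).trace)) =
          γ₀ * (-(((W₀ + ∑ i ∈ insert ω (S ∪ R), W i)⁻¹).trace) -
            -(((W₀ + ∑ i ∈ S ∪ R, W i)⁻¹).trace)) +
          γ₀ * (-(((W₀ + ∑ i ∈ S ∪ R, W i)⁻¹).trace) -
            -(((W₀ + ∑ i ∈ S, W i)⁻¹).trace)) := by ring
      rw [expand]
      linarith
  intro Ω S
  rw [ge_iff_le]
  have h := key (Ω \ S) S Finset.sdiff_disjoint
  rwa [Finset.union_sdiff_self_eq_union] at h
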